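/- Consistency of observed keys with any candidate secret (Sybil resistance, Proposition 1): let x_1, x_2 be distinct real numbers, let b_1, b_2 be nonzero real numbers, let v_1, …, v_n be vectors in ℝ^d, and let a be any nonzero real number. Then there exist a polynomial g ∈ ℝ[X] of degree at most 1 and vectors v'_1, …, v'_n in ℝ^d such that g(x_1) = a, and for every k, g(x_1) • v'_k = b_1 • v_k and g(x_2) • v'_k = b_2 • v_k. In other words, the two users' observed bases {b_1 • v_k} and {b_2 • v_k} are consistent with the assignment f(x_1) = a for every nonzero value a, so colluding users cannot isolate the group manager's secret polynomial or basis. -/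

import Mathlib

/-- Sybil resistance (Proposition 1): the observed bases `b₁ • v k` and
`b₂ • v k` of two colluding users with distinct public keys `x₁ ≠ x₂` are
consistent with *any* nonzero candidate value `a` for `f(x₁)`: there is a
degree-≤1 polynomial `g` with `g(x₁) = a` and a family of vectors `v'` that
reproduce exactly the same observed secrets. -/
theorem stmt_9 (d n : ℕ) (x₁ x₂ : ℝ) (hx : x₁ ≠ x₂) (b₁ b₂ : ℝ)
    (hb₁ : b₁ ≠ 0) (hb₂ : b₂ ≠ 0) (v : Fin n → EuclideanSpace ℝ (Fin d))
    (a : ℝ) (ha : a ≠ 0) :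
    ∃ (g : Polynomial ℝ) (v' : Fin n → EuclideanSpace ℝ (Fin d)),
      g.degree ≤ 1 ∧ g.eval x₁ = a ∧
      ∀ k, g.eval x₁ • v' k = b₁ • v k ∧ g.eval x₂ • v' k = b₂ • v k := by
  set c : ℝ := a * b₂ / b₁ with hc
  set m : ℝ := (c - a) / (x₂ - x₁) with hm
  refine ⟨Polynomial.C a + Polynomial.C m * (Polynomial.X - Polynomial.C x₁),
    fun k => (b₁ / a) • v k, ?_, ?_, ?_⟩
  · compute_degree
  · simp
  · have hx' : x₂ - x₁ ≠ 0 := sub_ne_zero.mpr (Ne.symm hx)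
    have h2 : m * (x₂ - x₁) = c - a := by rw [hm]; field_simp
    intro k
    constructor
    · simp only [Polynomial.eval_add, Polynomial.eval_mul, Polynomial.eval_sub,
        Polynomial.eval_C, Polynomial.eval_X, sub_self, mul_zero, add_zero]
      rw [smul_smul]
      congr 1
      field_simp
    · simp only [Polynomial.eval_add, Polynomial.eval_mul, Polynomial.eval_sub,
        Polynomial.eval_C, Polynomial.eval_X, h2]
      rw [smul_smul]
      congr 1
      rw [hc]
      field_simp [hc]
      ring
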